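/- Define graphs G(k,r) inductively: G(1,r) is a rooted tree of depth binom(1+r,r) and branching degree d; G(k,1) is the ancestor-descendant closure of a rooted tree of depth binom(k+1,1) and branching degree d; for k,r ≥ 2, G(k,r) is obtained from G(k,r−1) by attaching, to every leaf v of the underlying spanning tree, d copies of G(k−1,r) fully adjacent to v. Then for every vertex v of G(k,r) and every ancestor u of v in the underlying spanning tree T(k,r), there exists a path in G(k,r) from v to u of length at most r using only vertices on the tree-path from v to u in T(k,r). -/

import Mathlib

/-- The depth (number of edges from root to leaves) of the tree `T(k,r)`, a rooted tree
with `binom(k+r,r)` levels of vertices. -/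
def treeDepth (k r : ℕ) : ℕ := Nat.choose (k + r) r - 1

/-- The set of pairs of levels `(i,j)`, `i < j`, such that in `G(k,r)` an ancestor at
level `i` is adjacent to each of its descendants at level `j`. This encodes the
recursive construction: `G(1,r)` is a tree (only consecutive levels adjacent); `G(k,1)`
is the ancestor-descendant closure of its tree (all level pairs adjacent); and for
`k,r ≥ 2`, `G(k,r)` consists of `G(k,r-1)`, together with copies of `G(k-1,r)` attached
below the leaves (at level `treeDepth k (r-1)`) of the tree of `G(k,r-1)`, each copy
fully adjacent to the leaf it is attached to. -/
def Edg : ℕ → ℕ → Set (ℕ × ℕ)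
  | 0, _ => ∅
  | _ + 1, 0 => ∅
  | 1, r + 1 => {p | p.2 = p.1 + 1 ∧ p.2 ≤ treeDepth 1 (r + 1)}
  | k + 2, 1 => {p | p.1 < p.2 ∧ p.2 ≤ treeDepth (k + 2) 1}
  | k + 2, r + 2 =>
      Edg (k + 2) (r + 1) ∪
      {p | p.1 = treeDepth (k + 2) (r + 1) ∧
           treeDepth (k + 2) (r + 1) < p.2 ∧ p.2 ≤ treeDepth (k + 2) (r + 2)} ∪
      (fun q : ℕ × ℕ => (q.1 + treeDepth (k + 2) (r + 1) + 1,
                         q.2 + treeDepth (k + 2) (r + 1) + 1)) '' Edg (k + 1) (r + 2)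
  termination_by k r => (k, r)

/-- The graph `G(k,r)` with branching degree `d`: its vertices are the vertices of the
complete `d`-ary rooted tree `T(k,r)` of depth `treeDepth k r` (encoded as lists over
`Fin d`, with the ancestor relation given by the prefix relation), and an
ancestor-descendant pair is adjacent exactly when its pair of levels lies in
`Edg k r`. -/
def lbGraph (d k r : ℕ) : SimpleGraph {l : List (Fin d) // l.length ≤ treeDepth k r} :=
  SimpleGraph.fromRel fun u v => u.1 <+: v.1 ∧ (u.1.length, v.1.length) ∈ Edg k r

inductive Down (E : Set (ℕ × ℕ)) : ℕ → ℕ → ℕ → Prop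
  | refl (j : ℕ) : Down E j j 0
  | cons {i j j' n : ℕ} : j' < j → (j', j) ∈ E → Down E i j' n → Down E i j (n + 1)

lemma Down.le {E : Set (ℕ × ℕ)} {i j n : ℕ} (h : Down E i j n) : i ≤ j := by
  induction h with
  | refl => exact le_rfl
  | cons h1 _ _ ih => omega

lemma Down.mono {E E' : Set (ℕ × ℕ)} (hE : E ⊆ E') {i j n : ℕ} (h : Down E i j n) :
    Down E' i j n := by
  induction h with
  | refl => exact .refl _
  | cons h1 h2 _ ih => exact .cons h1 (hE h2) ih

lemma Down.shift {E : Set (ℕ × ℕ)} (s : ℕ) {i j n : ℕ} (h : Down E i j n) :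
    Down ((fun q : ℕ × ℕ => (q.1 + s, q.2 + s)) '' E) (i + s) (j + s) n := by
  induction h with
  | refl => exact .refl _
  | cons h1 h2 _ ih => exact .cons (by omega) ⟨_, h2, rfl⟩ ih

lemma treeDepth_one (r : ℕ) : treeDepth 1 (r + 1) = r + 1 := by
  show Nat.choose (1 + (r+1)) (r+1) - 1 = r + 1
  rw [show 1 + (r+1) = (r+1) + 1 by ring, Nat.choose_succ_self_right]
  omega

lemma treeDepth_pascal (k r : ℕ) :
    treeDepth (k+2) (r+2) = treeDepth (k+2) (r+1) + 1 + treeDepth (k+1) (r+2) := by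
  have h2 := Nat.choose_succ_succ ((k+2)+(r+1)) (r+1)
  simp only [Nat.succ_eq_add_one] at h2
  rw [show r+1+1 = r+2 by ring] at h2
  have h3 : 0 < Nat.choose ((k+2)+(r+1)) (r+1) := Nat.choose_pos (by omega)
  have h4 : 0 < Nat.choose ((k+2)+(r+1)) (r+2) := Nat.choose_pos (by omega)
  simp only [treeDepth]
  rw [show (k+2) + (r+2) = ((k+2)+(r+1)) + 1 by ring,
      show (k+1) + (r+2) = (k+2) + (r+1) by ring, h2]
  omega

lemma key : ∀ k r : ℕ, 1 ≤ k → 1 ≤ r → ∀ i j : ℕ, i ≤ j → j ≤ treeDepth k r →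
    ∃ n ≤ r, Down (Edg k r) i j n
  | 0, _ => by omega
  | _ + 1, 0 => by omega
  | 1, r + 1 => by
    intro _ _ i j hij hj
    rw [treeDepth_one] at hj
    refine ⟨j - i, by omega, ?_⟩
    have gen : ∀ m i', i' + m ≤ r + 1 → Down (Edg 1 (r+1)) i' (i' + m) m := by
      intro m
      induction m with
      | zero => exact fun i' _ => .refl _
      | succ p ih =>
        intro i' h
        refine .cons (by omega) ?_ (ih i' (by omega))
        rw [Edg]
        exact ⟨rfl, by rw [treeDepth_one]; omega⟩
    have := gen (j - i) i (by omega)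
    rwa [show i + (j - i) = j by omega] at this
  | k + 2, 1 => by
    intro _ _ i j hij hj
    rcases eq_or_lt_of_le hij with rfl | hlt
    · exact ⟨0, by omega, .refl _⟩
    · refine ⟨1, le_rfl, .cons hlt ?_ (.refl _)⟩
      rw [Edg]; exact ⟨hlt, hj⟩
  | k + 2, r + 2 => by
    intro _ _ i j hij hj
    have hpas := treeDepth_pascal k r
    have hsub1 : Edg (k+2) (r+1) ⊆ Edg (k+2) (r+2) := by
      intro p hp; rw [Edg]; exact Or.inl (Or.inl hp)
    by_cases hjD : j ≤ treeDepth (k+2) (r+1)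
    · obtain ⟨n, hn, hd⟩ := key (k+2) (r+1) (by omega) (by omega) i j hij hjD
      exact ⟨n, by omega, hd.mono hsub1⟩
    · push_neg at hjD
      by_cases hiD : treeDepth (k+2) (r+1) < i
      · obtain ⟨n, hn, hd⟩ := key (k+1) (r+2) (by omega) (by omega)
          (i - treeDepth (k+2) (r+1) - 1) (j - treeDepth (k+2) (r+1) - 1)
          (by omega) (by omega)
        refine ⟨n, by omega, ?_⟩
        have := hd.shift (treeDepth (k+2) (r+1) + 1)
        rw [show i - treeDepth (k+2) (r+1) - 1 + (treeDepth (k+2) (r+1) + 1) = i by omega,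
            show j - treeDepth (k+2) (r+1) - 1 + (treeDepth (k+2) (r+1) + 1) = j by omega] at this
        refine this.mono ?_
        intro p hp; rw [Edg]
        refine Or.inr ?_
        obtain ⟨q, hq, hqe⟩ := hp
        exact ⟨q, hq, by rw [← hqe]; simp [Prod.ext_iff]; constructor <;> ring⟩
      · push_neg at hiD
        obtain ⟨n, hn, hd⟩ := key (k+2) (r+1) (by omega) (by omega) i
          (treeDepth (k+2) (r+1)) hiD le_rfl
        refine ⟨n + 1, by omega, .cons hjD ?_ (hd.mono hsub1)⟩
        rw [Edg]
        exact Or.inl (Or.inr ⟨rfl, hjD, hj⟩)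
  termination_by k r => (k, r)

def tkVert (d k r : ℕ) (v : {l : List (Fin d) // l.length ≤ treeDepth k r}) (a : ℕ) :
    {l : List (Fin d) // l.length ≤ treeDepth k r} :=
  ⟨v.1.take a, le_trans (by rw [List.length_take]; exact min_le_right _ _) v.2⟩

lemma walkOf (d k r : ℕ) (v : {l : List (Fin d) // l.length ≤ treeDepth k r})
    {i j n : ℕ} (hd2 : Down (Edg k r) i j n) (hj : j ≤ v.1.length) :
    ∃ p : (lbGraph d k r).Walk (tkVert d k r v j) (tkVert d k r v i),
      p.length = n ∧ ∀ w ∈ p.support, ∃ a, i ≤ a ∧ a ≤ j ∧ w.1 = v.1.take a := by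
  have hlen : ∀ a, a ≤ v.1.length → (v.1.take a).length = a := by
    intro a ha; rw [List.length_take]; omega
  revert hj
  induction hd2 with
  | refl =>
    intro hj
    exact ⟨SimpleGraph.Walk.nil, rfl, by
      intro w hw
      simp only [SimpleGraph.Walk.support_nil, List.mem_singleton] at hw
      exact ⟨_, le_rfl, le_rfl, by rw [hw]; rfl⟩⟩
  | @cons j j' n hlt hmem hdown ih =>
    intro hj
    obtain ⟨p, hplen, hpsupp⟩ := ih (by omega)
    have hadj : (lbGraph d k r).Adj (tkVert d k r v j) (tkVert d k r v j') := by
      rw [lbGraph, SimpleGraph.fromRel_adj]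
      refine ⟨?_, Or.inr ⟨List.take_isPrefix_take.mpr (Or.inl (le_of_lt hlt)), ?_⟩⟩
      · intro h
        have := congrArg (fun w => w.1.length) h
        simp only [tkVert] at this
        rw [hlen j hj, hlen j' (by omega)] at this
        omega
      · show ((v.1.take j').length, (v.1.take j).length) ∈ Edg k r
        rw [hlen j hj, hlen j' (by omega)]
        exact hmem
    refine ⟨SimpleGraph.Walk.cons hadj p, by simp [hplen], ?_⟩
    intro w hw
    rw [SimpleGraph.Walk.support_cons, List.mem_cons] at hw
    rcases hw with rfl | hw
    · exact ⟨j, hdown.le.trans (le_of_lt hlt), le_rfl, rfl⟩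
    · obtain ⟨a, ha1, ha2, ha3⟩ := hpsupp w hw
      exact ⟨a, ha1, by omega, ha3⟩


/-- In `G(k,r)`, for every vertex `v` and every ancestor `u` of `v` in the underlying
tree `T(k,r)` (i.e. `u` is a prefix of `v`), there is a path from `v` to `u` of length
at most `r` using only vertices on the tree-path from `v` to `u` (i.e. prefixes of `v`
extending `u`). -/
theorem stmt18 (d k r : ℕ) (hk : 1 ≤ k) (hr : 1 ≤ r)
    (v u : {l : List (Fin d) // l.length ≤ treeDepth k r}) (hanc : u.1 <+: v.1) :
    ∃ p : (lbGraph d k r).Walk v u, p.length ≤ r ∧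
      ∀ w ∈ p.support, u.1 <+: w.1 ∧ w.1 <+: v.1 := by
  obtain ⟨n, hn, hd⟩ := key k r hk hr u.1.length v.1.length hanc.length_le v.2
  obtain ⟨p, hplen, hpsupp⟩ := walkOf d k r v hd le_rfl
  have hv : tkVert d k r v v.1.length = v := Subtype.ext List.take_length
  have hu : tkVert d k r v u.1.length = u :=
    Subtype.ext (List.prefix_iff_eq_take.mp hanc).symm
  refine ⟨p.copy hv hu, ?_, ?_⟩
  · rw [SimpleGraph.Walk.length_copy, hplen]; exact hn
  · intro w hw
    rw [SimpleGraph.Walk.support_copy] at hw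
    obtain ⟨a, ha1, ha2, ha3⟩ := hpsupp w hw
    constructor
    · rw [List.prefix_iff_eq_take.mp hanc, ha3]
      exact List.take_isPrefix_take.mpr (Or.inl ha1)
    · rw [ha3]; exact List.take_prefix a v.1
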